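/- For all real numbers x₁, x₂, x₃ and every z ∈ ℍ, let M be the 3×3 complex matrix whose first row is ((z − x₁)⁻², (z − x₂)⁻², (z − x₃)⁻²), whose second row is ((z̄ − x₁)⁻², (z̄ − x₂)⁻², (z̄ − x₃)⁻²) (z̄ denoting the complex conjugate of z), and whose third row is (2·Im(z)/|z − x₁|², 2·Im(z)/|z − x₂|², 2·Im(z)/|z − x₃|²) (real numbers regarded as complex numbers). Then (−i) · det M = 16 (x₂ − x₁)(x₃ − x₂)(x₃ − x₁) · Im(z)⁴ / (|z − x₁|⁴ |z − x₂|⁴ |z − x₃|⁴), as an equality of complex numbers. -/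

import Mathlib

open ComplexConjugate

set_option maxHeartbeats 1000000 in
/-- The determinant identity (3.13) in the proof of Lemma 3.3, identifying the determinant
observable with the tripod partition function on the upper half-plane. -/
theorem det_observable_eq_tripod (x₁ x₂ x₃ : ℝ) (z : ℂ) (hz : 0 < z.im) :
    (-Complex.I) * Matrix.det
      !![((z - (x₁ : ℂ)) ^ 2)⁻¹, ((z - (x₂ : ℂ)) ^ 2)⁻¹, ((z - (x₃ : ℂ)) ^ 2)⁻¹;
         ((conj z - (x₁ : ℂ)) ^ 2)⁻¹, ((conj z - (x₂ : ℂ)) ^ 2)⁻¹, ((conj z - (x₃ : ℂ)) ^ 2)⁻¹;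
         ((2 * z.im / ‖z - (x₁ : ℂ)‖ ^ 2 : ℝ) : ℂ),
           ((2 * z.im / ‖z - (x₂ : ℂ)‖ ^ 2 : ℝ) : ℂ),
           ((2 * z.im / ‖z - (x₃ : ℂ)‖ ^ 2 : ℝ) : ℂ)] =
    ((16 * (x₂ - x₁) * (x₃ - x₂) * (x₃ - x₁) * z.im ^ 4 /
        (‖z - (x₁ : ℂ)‖ ^ 4 * ‖z - (x₂ : ℂ)‖ ^ 4 *
          ‖z - (x₃ : ℂ)‖ ^ 4) : ℝ) : ℂ) := by
  have hne : ∀ x : ℝ, (z - (x : ℂ)) ≠ 0 := by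
    intro x h
    have : (z - (x:ℂ)).im = 0 := by rw [h]; simp
    simp at this; linarith
  have hnec : ∀ x : ℝ, (conj z - (x : ℂ)) ≠ 0 := by
    intro x h
    have : (conj z - (x:ℂ)).im = 0 := by rw [h]; simp
    simp at this; linarith
  have key : ∀ x : ℝ, ((‖z - (x:ℂ)‖ : ℝ) : ℂ)^2 = (z - x) * (conj z - x) := by
    intro x
    rw [show ((‖z - (x:ℂ)‖ : ℝ):ℂ)^2 = ((Complex.normSq (z - (x:ℂ)) : ℝ):ℂ) by
      rw [← Complex.sq_norm]; push_cast; ring]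
    rw [← Complex.mul_conj]
    simp [map_sub, Complex.conj_ofReal]
  have key4 : ∀ x : ℝ, ((‖z - (x:ℂ)‖ : ℝ) : ℂ)^4 = ((z - x) * (conj z - x))^2 := by
    intro x
    rw [show ((‖z - (x:ℂ)‖ : ℝ):ℂ)^4 = (((‖z - (x:ℂ)‖ : ℝ):ℂ)^2)^2 by ring,
      key x]
  have hI4 : Complex.I ^ 4 = 1 := by
    rw [show (4:ℕ) = 2*2 from rfl, pow_mul, Complex.I_sq]; norm_num
  have h2t : 2 * (z.im : ℂ) = Complex.I * (conj z - z) := by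
    have h := Complex.sub_conj z
    push_cast at h
    linear_combination Complex.I * h + 2 * (z.im:ℂ) * Complex.I_sq
  have him4 : ((z.im : ℝ) : ℂ)^4 = (z - conj z)^4 / 16 := by
    have h := Complex.sub_conj z
    push_cast at h
    rw [h, mul_pow, mul_pow, hI4]
    ring
  have hent : ∀ x : ℝ, ((2 * z.im / ‖z - (x : ℂ)‖ ^ 2 : ℝ) : ℂ) =
      Complex.I * ((conj z - z) / ((z - x) * (conj z - x))) := by
    intro x
    push_cast
    rw [key x, h2t]
    ring
  rw [Matrix.det_fin_three]
  simp only [Matrix.of_apply, Matrix.cons_val', Matrix.cons_val_zero, Matrix.empty_val',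
    Matrix.cons_val_fin_one, Matrix.cons_val_one, Matrix.head_cons, Matrix.head_fin_const,
    Matrix.cons_val_two, Matrix.tail_cons]
  rw [hent x₁, hent x₂, hent x₃]
  push_cast
  rw [him4]
  simp only [key4]
  -- reduce the number of atoms
  obtain ⟨a₁, ha₁⟩ : ∃ a, (x₁:ℂ) = z - a := ⟨z - x₁, by ring⟩
  obtain ⟨a₂, ha₂⟩ : ∃ a, (x₂:ℂ) = z - a := ⟨z - x₂, by ring⟩
  obtain ⟨a₃, ha₃⟩ : ∃ a, (x₃:ℂ) = z - a := ⟨z - x₃, by ring⟩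
  obtain ⟨s, hs⟩ : ∃ s, conj z = z - s := ⟨z - conj z, by ring⟩
  have h₁ : a₁ ≠ 0 := by have := hne x₁; rw [ha₁, show z - (z - a₁) = a₁ from by ring] at this; exact this
  have h₂ : a₂ ≠ 0 := by have := hne x₂; rw [ha₂, show z - (z - a₂) = a₂ from by ring] at this; exact this
  have h₃ : a₃ ≠ 0 := by have := hne x₃; rw [ha₃, show z - (z - a₃) = a₃ from by ring] at this; exact this
  have g₁ : a₁ - s ≠ 0 := by
    have := hnec x₁
    rw [ha₁, hs, show z - s - (z - a₁) = a₁ - s from by ring] at this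
    exact this
  have g₂ : a₂ - s ≠ 0 := by
    have := hnec x₂
    rw [ha₂, hs, show z - s - (z - a₂) = a₂ - s from by ring] at this
    exact this
  have g₃ : a₃ - s ≠ 0 := by
    have := hnec x₃
    rw [ha₃, hs, show z - s - (z - a₃) = a₃ - s from by ring] at this
    exact this
  rw [ha₁, ha₂, ha₃, hs]
  have e₁ : z - (z - a₁) = a₁ := by ring
  have e₂ : z - (z - a₂) = a₂ := by ring
  have e₃ : z - (z - a₃) = a₃ := by ring
  have f₁ : z - s - (z - a₁) = a₁ - s := by ring
  have f₂ : z - s - (z - a₂) = a₂ - s := by ring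
  have f₃ : z - s - (z - a₃) = a₃ - s := by ring
  have fz : z - (z - s) = s := by ring
  have fneg : z - s - z = -s := by ring
  have hD : (a₁ * (a₁ - s) * a₂ * (a₂ - s) * a₃ * (a₃ - s)) ^ 2 ≠ 0 := by
    apply pow_ne_zero
    exact mul_ne_zero (mul_ne_zero (mul_ne_zero (mul_ne_zero (mul_ne_zero h₁ g₁) h₂) g₂) h₃) g₃
  rw [e₁, e₂, e₃, f₁, f₂, f₃, fz, fneg]
  have E₁ : (a₁ ^ 2)⁻¹ * ((a₂ - s) ^ 2)⁻¹ * (Complex.I * (-s / (a₃ * (a₃ - s)))) =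
      Complex.I * ((-s * (a₁ - s)^2 * a₂^2 * a₃ * (a₃ - s)) /
        (a₁ * (a₁ - s) * a₂ * (a₂ - s) * a₃ * (a₃ - s)) ^ 2) := by
    conv_rhs => rw [mul_div_assoc']
    rw [eq_div_iff hD]
    field_simp
  have E₂ : (a₁ ^ 2)⁻¹ * ((a₃ - s) ^ 2)⁻¹ * (Complex.I * (-s / (a₂ * (a₂ - s)))) =
      Complex.I * ((-s * (a₁ - s)^2 * a₂ * (a₂ - s) * a₃^2) /
        (a₁ * (a₁ - s) * a₂ * (a₂ - s) * a₃ * (a₃ - s)) ^ 2) := by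
    conv_rhs => rw [mul_div_assoc']
    rw [eq_div_iff hD]
    field_simp
  have E₃ : (a₂ ^ 2)⁻¹ * ((a₁ - s) ^ 2)⁻¹ * (Complex.I * (-s / (a₃ * (a₃ - s)))) =
      Complex.I * ((-s * a₁^2 * (a₂ - s)^2 * a₃ * (a₃ - s)) /
        (a₁ * (a₁ - s) * a₂ * (a₂ - s) * a₃ * (a₃ - s)) ^ 2) := by
    conv_rhs => rw [mul_div_assoc']
    rw [eq_div_iff hD]
    field_simp
  have E₄ : (a₂ ^ 2)⁻¹ * ((a₃ - s) ^ 2)⁻¹ * (Complex.I * (-s / (a₁ * (a₁ - s)))) =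
      Complex.I * ((-s * a₁ * (a₁ - s) * (a₂ - s)^2 * a₃^2) /
        (a₁ * (a₁ - s) * a₂ * (a₂ - s) * a₃ * (a₃ - s)) ^ 2) := by
    conv_rhs => rw [mul_div_assoc']
    rw [eq_div_iff hD]
    field_simp
  have E₅ : (a₃ ^ 2)⁻¹ * ((a₁ - s) ^ 2)⁻¹ * (Complex.I * (-s / (a₂ * (a₂ - s)))) =
      Complex.I * ((-s * a₁^2 * a₂ * (a₂ - s) * (a₃ - s)^2) /
        (a₁ * (a₁ - s) * a₂ * (a₂ - s) * a₃ * (a₃ - s)) ^ 2) := by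
    conv_rhs => rw [mul_div_assoc']
    rw [eq_div_iff hD]
    field_simp
  have E₆ : (a₃ ^ 2)⁻¹ * ((a₂ - s) ^ 2)⁻¹ * (Complex.I * (-s / (a₁ * (a₁ - s)))) =
      Complex.I * ((-s * a₁ * (a₁ - s) * a₂^2 * (a₃ - s)^2) /
        (a₁ * (a₁ - s) * a₂ * (a₂ - s) * a₃ * (a₃ - s)) ^ 2) := by
    conv_rhs => rw [mul_div_assoc']
    rw [eq_div_iff hD]
    field_simp
  rw [E₁, E₂, E₃, E₄, E₅, E₆]
  simp only [← mul_sub, ← mul_add]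
  rw [← mul_assoc,
    show -Complex.I * Complex.I = 1 from by rw [neg_mul, Complex.I_mul_I, neg_neg], one_mul]
  simp only [div_sub_div_same, ← add_div]
  have hD2 : (a₁ * (a₁ - s)) ^ 2 * (a₂ * (a₂ - s)) ^ 2 * (a₃ * (a₃ - s)) ^ 2 ≠ 0 :=
    mul_ne_zero (mul_ne_zero (pow_ne_zero _ (mul_ne_zero h₁ g₁)) (pow_ne_zero _ (mul_ne_zero h₂ g₂)))
      (pow_ne_zero _ (mul_ne_zero h₃ g₃))
  rw [div_eq_div_iff hD hD2]
  ring
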